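/- Let ρ: [0,∞) → ℝ satisfy −ρ ∈ 𝒫 and ∫₀¹ ds/(−ρ(s)) = ∞, let α ∈ 𝒦∞ and θ, δ > 0 with ∫_{α(a)}^a ds/(−ρ(s)) ≥ θ + δ for all a > 0. Set F̃(q) := ∫₁^q ds/(−ρ(s)) for q > 0, a strictly increasing continuous bijection from (0,∞) onto (−∞, M̃) with M̃ := lim_{q→∞} F̃(q) ∈ (0,∞]. Let ψ₁, ψ₂, η ∈ 𝒦∞, ψ₃ ∈ 𝒦, X a real normed space, t₀ ∈ ℝ, (tᵢ) an impulse time sequence with t_{i+1} − tᵢ ≤ θ for all i ≥ 0, and r ≥ 0. Let V_cand: X → [0,∞) be continuous with ψ₁(‖y‖) ≤ V_cand(y) ≤ ψ₂(‖y‖), and let x: [t₀,∞) → X be such that w(t) := V_cand(x(t)) is impulsive-regular and satisfies: D⁺w(t) ≤ −ρ(w(t)) at non-impulse times with w(t) ≥ η(r); w(tᵢ) ≤ α(w(tᵢ⁻)) at impulse times with w(tᵢ⁻) ≥ η(r); and w(tᵢ) ≤ ψ₃(r) at impulse times with w(tᵢ⁻) < η(r). Define V(t,y) := F̃⁻¹(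 F̃(V_cand(y)) − ((t − tᵢ)/(t_{i+1} − tᵢ))(θ + δ) ) for t ∈ [tᵢ, t_{i+1}) (i ≥ 0) and V_cand(y) > 0, and V(t,y) := 0 when V_cand(y) = 0. Then: (i) there exist α₁, α₂ ∈ 𝒦∞ with α₁(‖y‖) ≤ V(t,y) ≤ α₂(‖y‖) for all t, y (one may take α₂ = ψ₂ and α₁(s) := F̃⁻¹(F̃(ψ₁(s)) − (θ + δ)) for s > 0, α₁(0) := 0); (ii) at every non-impulse time t with V(t,x(t)) ≥ η(r): D⁺[V(t,x(t))] ≤ −(δ/θ)(−ρ)(V(t,x(t))), and at every impulse time with V(tᵢ⁻,x(tᵢ⁻)) ≥ η(r): V(tᵢ,x(tᵢ)) ≤ V(tᵢ⁻,x(tᵢ⁻)) (left limits of the impulsive-regular map t ↦ V(t,x(t))); (iii) at every impulse time with V(tᵢ⁻,x(tᵢ⁻)) < η(r): V(tᵢ,x(tᵢ)) ≤ max{ψ₃(r), η(r)}. -/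

import Mathlib

open Filter Topology Set MeasureTheory

noncomputable section

/-- Class 𝒦: continuous, strictly increasing on `[0,∞)`, vanishing at `0`. -/
def ClassK (γ : ℝ → ℝ) : Prop :=
  ContinuousOn γ (Set.Ici 0) ∧ StrictMonoOn γ (Set.Ici 0) ∧ γ 0 = 0

/-- Class 𝒦∞: class 𝒦 and unbounded. -/
def ClassKInf (γ : ℝ → ℝ) : Prop :=
  ClassK γ ∧ Filter.Tendsto γ Filter.atTop Filter.atTop

/-- Class 𝒦ℒ. -/
def ClassKL (β : ℝ → ℝ → ℝ) : Prop :=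
  (∀ s, 0 ≤ s → ClassK (fun r => β r s)) ∧
  (∀ r, 0 ≤ r → AntitoneOn (fun s => β r s) (Set.Ici 0) ∧
    Filter.Tendsto (fun s => β r s) Filter.atTop (nhds 0))

/-- Class 𝒫: continuous, positive definite. -/
def ClassP (φ : ℝ → ℝ) : Prop :=
  ContinuousOn φ (Set.Ici 0) ∧ φ 0 = 0 ∧ ∀ r, 0 < r → 0 < φ r

/-- Upper right Dini derivative `D⁺v(t) = limsup_{s→0⁺} (v(t+s) − v(t))/s`, valued in `EReal`. -/
def DiniUpper (v : ℝ → ℝ) (t : ℝ) : EReal :=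
  Filter.limsup (fun s => (((v (t + s) - v t) / s : ℝ) : EReal)) (nhdsWithin 0 (Set.Ioi 0))

/-- Impulse time sequence with initial time `t₀ = τ 0`: strictly increasing and tending to `∞`;
the impulse times are `τ i` for `i ≥ 1`. -/
def IsImpulseSeq (t₀ : ℝ) (τ : ℕ → ℝ) : Prop :=
  τ 0 = t₀ ∧ StrictMono τ ∧ Filter.Tendsto τ Filter.atTop Filter.atTop

/-- The set `S = {tᵢ : i ≥ 1}` of impulse times. -/
def impulseSet (τ : ℕ → ℝ) : Set ℝ := {s | ∃ i : ℕ, 1 ≤ i ∧ τ i = s}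

/-- Impulsive-regular function on `[t₀,∞)`: right-continuous everywhere, continuous (within
`[t₀,∞)`) at every non-impulse time, and left limits exist at every impulse time. -/
def ImpulsiveRegular (t₀ : ℝ) (τ : ℕ → ℝ) (v : ℝ → ℝ) : Prop :=
  (∀ t, t₀ ≤ t → ContinuousWithinAt v (Set.Ici t) t) ∧
  (∀ t, t₀ ≤ t → t ∉ impulseSet τ → ContinuousWithinAt v (Set.Ici t₀) t) ∧
  (∀ i : ℕ, 1 ≤ i → ∃ L : ℝ, Filter.Tendsto v (nhdsWithin (τ i) (Set.Iio (τ i))) (nhds L))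

lemma classK_nonneg {γ : ℝ → ℝ} (hmono : StrictMonoOn γ (Set.Ici 0)) (h0 : γ 0 = 0)
    {s : ℝ} (hs : 0 ≤ s) : 0 ≤ γ s := by
  rcases eq_or_lt_of_le hs with rfl | hs'
  · exact le_of_eq h0.symm
  · exact h0 ▸ (hmono (Set.mem_Ici.2 le_rfl) (Set.mem_Ici.2 hs) hs').le

lemma classK_pos {γ : ℝ → ℝ} (hmono : StrictMonoOn γ (Set.Ici 0)) (h0 : γ 0 = 0)
    {s : ℝ} (hs : 0 < s) : 0 < γ s :=
  h0 ▸ hmono (Set.mem_Ici.2 le_rfl) (Set.mem_Ici.2 hs.le) hs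

section Faux

variable {P F : ℝ → ℝ}

lemma aux_contOn (hPc : ContinuousOn P (Set.Ici 0)) (hPpos : ∀ s, 0 < s → 0 < P s) :
    ContinuousOn (fun s => (P s)⁻¹) (Set.Ioi 0) :=
  ContinuousOn.inv₀ (hPc.mono (fun x hx => Set.mem_Ici.2 (le_of_lt (Set.mem_Ioi.1 hx)))) (fun x hx => (hPpos x hx).ne')

lemma aux_intble (hPc : ContinuousOn P (Set.Ici 0)) (hPpos : ∀ s, 0 < s → 0 < P s)
    {a b : ℝ} (ha : 0 < a) (hb : 0 < b) :
    IntervalIntegrable (fun s => (P s)⁻¹) volume a b := by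
  apply ContinuousOn.intervalIntegrable
  apply (aux_contOn hPc hPpos).mono
  intro x hx
  exact lt_of_lt_of_le (lt_min ha hb) hx.1

lemma aux_F_sub (hPc : ContinuousOn P (Set.Ici 0)) (hPpos : ∀ s, 0 < s → 0 < P s)
    (hF : ∀ q, F q = ∫ s in (1:ℝ)..q, (P s)⁻¹)
    {a b : ℝ} (ha : 0 < a) (hb : 0 < b) :
    F b - F a = ∫ s in a..b, (P s)⁻¹ := by
  rw [hF, hF]
  rw [intervalIntegral.integral_interval_sub_left (aux_intble hPc hPpos one_pos hb)
    (aux_intble hPc hPpos one_pos ha)]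

lemma aux_F_lt (hPc : ContinuousOn P (Set.Ici 0)) (hPpos : ∀ s, 0 < s → 0 < P s)
    (hF : ∀ q, F q = ∫ s in (1:ℝ)..q, (P s)⁻¹)
    {a b : ℝ} (ha : 0 < a) (hab : a < b) : F a < F b := by
  have h := aux_F_sub hPc hPpos hF ha (ha.trans hab)
  have hpos : 0 < ∫ s in a..b, (P s)⁻¹ := by
    apply intervalIntegral.intervalIntegral_pos_of_pos_on (aux_intble hPc hPpos ha (ha.trans hab))
    · intro x hx
      exact inv_pos.2 (hPpos x (ha.trans hx.1))
    · exact hab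
  linarith

lemma aux_F_le (hPc : ContinuousOn P (Set.Ici 0)) (hPpos : ∀ s, 0 < s → 0 < P s)
    (hF : ∀ q, F q = ∫ s in (1:ℝ)..q, (P s)⁻¹)
    {a b : ℝ} (ha : 0 < a) (hab : a ≤ b) : F a ≤ F b := by
  rcases eq_or_lt_of_le hab with rfl | h
  · exact le_rfl
  · exact (aux_F_lt hPc hPpos hF ha h).le

lemma aux_F_deriv (hPc : ContinuousOn P (Set.Ici 0)) (hPpos : ∀ s, 0 < s → 0 < P s)
    (hF : ∀ q, F q = ∫ s in (1:ℝ)..q, (P s)⁻¹)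
    {q : ℝ} (hq : 0 < q) : HasDerivAt F (P q)⁻¹ q := by
  have hFeq : F = fun u => ∫ s in (1:ℝ)..u, (P s)⁻¹ := funext hF
  rw [hFeq]
  exact intervalIntegral.integral_hasDerivAt_right (aux_intble hPc hPpos one_pos hq)
    (ContinuousOn.stronglyMeasurableAtFilter isOpen_Ioi (aux_contOn hPc hPpos) q hq)
    ((aux_contOn hPc hPpos).continuousAt (IsOpen.mem_nhds isOpen_Ioi hq))

lemma aux_F_contAt (hPc : ContinuousOn P (Set.Ici 0)) (hPpos : ∀ s, 0 < s → 0 < P s)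
    (hF : ∀ q, F q = ∫ s in (1:ℝ)..q, (P s)⁻¹)
    {q : ℝ} (hq : 0 < q) : ContinuousAt F q :=
  (aux_F_deriv hPc hPpos hF hq).continuousAt

lemma aux_nu_eq (hPc : ContinuousOn P (Set.Ici 0)) (hPpos : ∀ s, 0 < s → 0 < P s)
    {q : ℝ} (hq : 0 < q) (hq1 : q ≤ 1) :
    ∫⁻ s in Set.Ioc q 1, ENNReal.ofReal ((P s)⁻¹) =
      ENNReal.ofReal (∫ s in q..(1:ℝ), (P s)⁻¹) := by
  have hint : IntegrableOn (fun s => (P s)⁻¹) (Set.Ioc q 1) volume := by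
    have := (aux_intble hPc hPpos hq one_pos)
    rw [intervalIntegrable_iff, Set.uIoc_of_le hq1] at this
    exact this
  have hnn : 0 ≤ᵐ[volume.restrict (Set.Ioc q 1)] fun s => (P s)⁻¹ := by
    rw [Filter.EventuallyLE, ae_restrict_iff' measurableSet_Ioc]
    filter_upwards with s hs
    exact (inv_pos.2 (hPpos s (hq.trans hs.1))).le
  rw [intervalIntegral.integral_of_le hq1,
    ← MeasureTheory.ofReal_integral_eq_lintegral_ofReal hint hnn]

lemma aux_F_atBot (hPc : ContinuousOn P (Set.Ici 0)) (hPpos : ∀ s, 0 < s → 0 < P s)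
    (hF : ∀ q, F q = ∫ s in (1:ℝ)..q, (P s)⁻¹)
    (hdiv : ∫⁻ s in Set.Ioc (0:ℝ) 1, ENNReal.ofReal ((P s)⁻¹) = ⊤) :
    Filter.Tendsto F (nhdsWithin 0 (Set.Ioi 0)) Filter.atBot := by
  rw [Filter.tendsto_atBot]
  intro b
  set C : ℝ := max (-b) 0 with hC
  have hC0 : 0 ≤ C := le_max_right _ _
  have hun : Set.Ioc (0:ℝ) 1 = ⋃ n : ℕ, Set.Ioc (((n:ℝ)+1)⁻¹) 1 := by
    ext z
    simp only [Set.mem_Ioc, Set.mem_iUnion]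
    constructor
    · rintro ⟨hz0, hz1⟩
      obtain ⟨n, hn⟩ := exists_nat_gt z⁻¹
      refine ⟨n, ?_, hz1⟩
      have h1 : z⁻¹ < (n:ℝ) + 1 := hn.trans (lt_add_one _)
      calc ((n:ℝ)+1)⁻¹ < (z⁻¹)⁻¹ := by
            apply inv_strictAnti₀ (inv_pos.2 hz0) h1
        _ = z := inv_inv z
    · rintro ⟨n, hn1, hn2⟩
      exact ⟨lt_of_le_of_lt (by positivity) hn1, hn2⟩
  have hmono : Monotone (fun n : ℕ => Set.Ioc (((n:ℝ)+1)⁻¹) 1) := by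
    intro m n hmn
    apply Set.Ioc_subset_Ioc_left
    apply inv_anti₀ (by positivity)
    have : (m:ℝ) ≤ n := Nat.cast_le.2 hmn
    linarith
  set ν := volume.withDensity (fun s => ENNReal.ofReal ((P s)⁻¹)) with hν
  have htop : ν (Set.Ioc (0:ℝ) 1) = ⊤ := by
    rw [hν, MeasureTheory.withDensity_apply _ measurableSet_Ioc]; exact hdiv
  have hsup : (⨆ n : ℕ, ν (Set.Ioc (((n:ℝ)+1)⁻¹) 1)) = ⊤ := by
    rw [← hmono.directed_le.measure_iUnion, ← hun, htop]
  have hlt : ENNReal.ofReal C < ⨆ n : ℕ, ν (Set.Ioc (((n:ℝ)+1)⁻¹) 1) := by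
    rw [hsup]; exact ENNReal.ofReal_lt_top
  obtain ⟨n, hn⟩ := lt_iSup_iff.1 hlt
  set q₀ : ℝ := ((n:ℝ)+1)⁻¹ with hq₀
  have hq₀pos : 0 < q₀ := by positivity
  have hq₀le : q₀ ≤ 1 := by
    rw [hq₀, inv_le_one_iff₀]
    right
    have : (0:ℝ) ≤ (n:ℝ) := Nat.cast_nonneg n
    linarith
  have hνq₀ : ν (Set.Ioc q₀ 1) = ENNReal.ofReal (∫ s in q₀..(1:ℝ), (P s)⁻¹) := by
    rw [hν, MeasureTheory.withDensity_apply _ measurableSet_Ioc]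
    exact aux_nu_eq hPc hPpos hq₀pos hq₀le
  have hCint : C < ∫ s in q₀..(1:ℝ), (P s)⁻¹ := by
    by_contra hcon
    push_neg at hcon
    rw [hνq₀] at hn
    exact absurd (ENNReal.ofReal_le_ofReal hcon) (not_le.2 hn)
  have hev : Set.Ioc (0:ℝ) q₀ ∈ nhdsWithin (0:ℝ) (Set.Ioi 0) :=
    Ioc_mem_nhdsGT_of_mem ⟨le_rfl, hq₀pos⟩
  filter_upwards [hev] with q hqmem
  obtain ⟨hq0, hqq₀⟩ := hqmem
  have hF1 : F 1 = 0 := by rw [hF]; exact intervalIntegral.integral_same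
  have hle : F q ≤ F q₀ := aux_F_le hPc hPpos hF hq0 hqq₀
  have hFq₀ : F q₀ - F 1 = - ∫ s in q₀..(1:ℝ), (P s)⁻¹ := by
    rw [aux_F_sub hPc hPpos hF one_pos hq₀pos, intervalIntegral.integral_symm]
  have h1 : F q₀ ≤ -C := by rw [hF1] at hFq₀; linarith
  have hCb : -C ≤ b := by
    have : -b ≤ C := le_max_left _ _
    linarith
  linarith

lemma aux_F_atTop {α : ℝ → ℝ} (hPc : ContinuousOn P (Set.Ici 0)) (hPpos : ∀ s, 0 < s → 0 < P s)
    (hF : ∀ q, F q = ∫ s in (1:ℝ)..q, (P s)⁻¹)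
    {θδ : ℝ} (hθδ : 0 < θδ)
    (hαc : ContinuousOn α (Set.Ici 0)) (hα0 : α 0 = 0)
    (hαtop : Filter.Tendsto α Filter.atTop Filter.atTop)
    (hjump' : ∀ a, 0 < a → F (α a) ≤ F a - θδ) :
    Filter.Tendsto F Filter.atTop Filter.atTop := by
  have key : ∀ n : ℕ, ∃ a : ℝ, 0 < a ∧ F 1 + n * θδ ≤ F a := by
    intro n
    induction n with
    | zero => exact ⟨1, one_pos, by simp⟩
    | succ n ih =>
      obtain ⟨a, ha, hFa⟩ := ih
      have hev : ∀ᶠ x in Filter.atTop, a ≤ α x := hαtop.eventually (Filter.eventually_ge_atTop a)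
      obtain ⟨c, hca, hc0⟩ := (hev.and (Filter.eventually_ge_atTop (0:ℝ))).exists
      have hivt : a ∈ α '' Set.Icc 0 c := by
        apply intermediate_value_Icc hc0 (hαc.mono Set.Icc_subset_Ici_self)
        refine ⟨?_, hca⟩
        rw [hα0]; exact ha.le
      obtain ⟨bb, hbmem, hbeq⟩ := hivt
      have hb0 : 0 < bb := by
        rcases eq_or_lt_of_le hbmem.1 with rfl | h
        · exfalso; rw [hα0] at hbeq; exact ha.ne hbeq
        · exact h
      refine ⟨bb, hb0, ?_⟩
      have := hjump' bb hb0
      rw [hbeq] at this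
      push_cast
      linarith
  rw [Filter.tendsto_atTop]
  intro M
  obtain ⟨n, hn⟩ := exists_nat_ge ((M - F 1) / θδ)
  have hM : M ≤ F 1 + n * θδ := by
    rw [div_le_iff₀ hθδ] at hn
    linarith
  obtain ⟨a, ha, hFa⟩ := key n
  filter_upwards [Filter.eventually_ge_atTop a] with x hx
  exact hM.trans (hFa.trans (aux_F_le hPc hPpos hF ha hx))

lemma aux_F_surj (hPc : ContinuousOn P (Set.Ici 0)) (hPpos : ∀ s, 0 < s → 0 < P s)
    (hF : ∀ q, F q = ∫ s in (1:ℝ)..q, (P s)⁻¹)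
    (hbot : Filter.Tendsto F (nhdsWithin 0 (Set.Ioi 0)) Filter.atBot)
    (htop : Filter.Tendsto F Filter.atTop Filter.atTop)
    (z : ℝ) : ∃ q, 0 < q ∧ F q = z := by
  have h1 : ∀ᶠ q in nhdsWithin (0:ℝ) (Set.Ioi 0), F q ≤ z :=
    hbot.eventually (Filter.eventually_le_atBot z)
  obtain ⟨q₁, hq₁F, hq₁pos⟩ := (h1.and self_mem_nhdsWithin).exists
  have h2 : ∀ᶠ q in Filter.atTop, z ≤ F q := htop.eventually (Filter.eventually_ge_atTop z)
  obtain ⟨q₂, hq₂F, hq₂ge⟩ := (h2.and (Filter.eventually_ge_atTop q₁)).exists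
  have hcont : ContinuousOn F (Set.Icc q₁ q₂) := by
    intro u hu
    exact (aux_F_contAt hPc hPpos hF (lt_of_lt_of_le hq₁pos hu.1)).continuousWithinAt
  have hmem : z ∈ F '' Set.Icc q₁ q₂ := intermediate_value_Icc hq₂ge hcont ⟨hq₁F, hq₂F⟩
  obtain ⟨q, hq, hqz⟩ := hmem
  exact ⟨q, lt_of_lt_of_le hq₁pos hq.1, hqz⟩

end Faux

section FinvAux
variable {F Finv : ℝ → ℝ}
variable (hFlt : ∀ {a b : ℝ}, 0 < a → a < b → F a < F b)
variable (hsurj : ∀ z : ℝ, ∃ q, 0 < q ∧ F q = z)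
variable (hFinv : ∀ q, 0 < q → Finv (F q) = q)

include hFlt hsurj hFinv

omit hFlt in
lemma aux_Finv_spec : ∀ z : ℝ, 0 < Finv z ∧ F (Finv z) = z := by
  intro z
  obtain ⟨q, hq, hFq⟩ := hsurj z
  rw [← hFq, hFinv q hq]
  exact ⟨hq, rfl⟩

lemma aux_Finv_lt_iff {q z : ℝ} (hq : 0 < q) : Finv z < q ↔ z < F q := by
  obtain ⟨hpos, hFz⟩ := aux_Finv_spec hsurj hFinv z
  constructor
  · intro h
    rw [← hFz]
    exact hFlt hpos h
  · intro h
    by_contra hcon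
    push_neg at hcon
    rcases eq_or_lt_of_le hcon with rfl | h2
    · rw [hFz] at h; exact lt_irrefl _ h
    · exact absurd (hFz ▸ hFlt hq h2) (not_lt.2 h.le)

lemma aux_Finv_lt_iff' {q z : ℝ} (hq : 0 < q) : q < Finv z ↔ F q < z := by
  obtain ⟨hpos, hFz⟩ := aux_Finv_spec hsurj hFinv z
  constructor
  · intro h; rw [← hFz]; exact hFlt hq h
  · intro h
    by_contra hcon
    push_neg at hcon
    rcases eq_or_lt_of_le hcon with rfl | h2
    · rw [hFz] at h; exact lt_irrefl _ h
    · exact absurd (hFz ▸ hFlt hpos h2) (not_lt.2 h.le)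

lemma aux_Finv_le_iff {q z : ℝ} (hq : 0 < q) : Finv z ≤ q ↔ z ≤ F q := by
  rw [← not_lt, ← not_lt, aux_Finv_lt_iff' hFlt hsurj hFinv hq]

lemma aux_Finv_le_iff' {q z : ℝ} (hq : 0 < q) : q ≤ Finv z ↔ F q ≤ z := by
  rw [← not_lt, ← not_lt, aux_Finv_lt_iff hFlt hsurj hFinv hq]

lemma aux_Finv_strictMono : StrictMono Finv := by
  intro z z' h
  rw [aux_Finv_lt_iff' hFlt hsurj hFinv (aux_Finv_spec hsurj hFinv z).1,
    (aux_Finv_spec hsurj hFinv z).2]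
  exact h

lemma aux_Finv_mono : Monotone Finv := (aux_Finv_strictMono hFlt hsurj hFinv).monotone

lemma aux_Finv_contAt (z : ℝ) : ContinuousAt Finv z := by
  rw [ContinuousAt]
  apply tendsto_order.2
  constructor
  · intro b hb
    rcases le_or_gt b 0 with hb0 | hb0
    · filter_upwards with z'
      exact lt_of_le_of_lt hb0 (aux_Finv_spec hsurj hFinv z').1
    · have hFb : F b < z := by
        rw [← aux_Finv_lt_iff' hFlt hsurj hFinv hb0]; exact hb
      filter_upwards [Ioi_mem_nhds hFb] with z' hz'
      exact (aux_Finv_lt_iff' hFlt hsurj hFinv hb0).2 hz'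
  · intro b hb
    have hb0 : 0 < b := lt_trans (aux_Finv_spec hsurj hFinv z).1 hb
    have hFb : z < F b := by
      rw [← aux_Finv_lt_iff hFlt hsurj hFinv hb0]; exact hb
    filter_upwards [Iio_mem_nhds hFb] with z' hz'
    exact (aux_Finv_lt_iff hFlt hsurj hFinv hb0).2 hz'

lemma aux_Finv_deriv {P : ℝ → ℝ} (hPpos : ∀ s, 0 < s → 0 < P s)
    (hFd : ∀ {q : ℝ}, 0 < q → HasDerivAt F (P q)⁻¹ q) (z : ℝ) :
    HasDerivAt Finv (P (Finv z)) z := by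
  have hpos := (aux_Finv_spec hsurj hFinv z).1
  have h := HasDerivAt.of_local_left_inverse (aux_Finv_contAt hFlt hsurj hFinv z)
    (hFd hpos) (inv_ne_zero (hPpos _ hpos).ne')
    (Filter.Eventually.of_forall (fun y => (aux_Finv_spec hsurj hFinv y).2))
  rwa [inv_inv] at h

lemma aux_Finv_atTop : Filter.Tendsto Finv Filter.atTop Filter.atTop := by
  rw [Filter.tendsto_atTop]
  intro M
  filter_upwards [Filter.Ici_mem_atTop (F (max M 1))] with z hz
  have h1 : max M 1 ≤ Finv z := by
    rw [aux_Finv_le_iff' hFlt hsurj hFinv (lt_of_lt_of_le one_pos (le_max_right M 1))]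
    exact hz
  exact (le_max_left M 1).trans h1

end FinvAux

section DiniAux

lemma dini_le_dini {f g : ℝ → ℝ} {t : ℝ}
    (h : ∀ᶠ s in nhdsWithin (0:ℝ) (Set.Ioi 0), (f (t+s) - f t)/s ≤ (g (t+s) - g t)/s) :
    DiniUpper f t ≤ DiniUpper g t := by
  refine Filter.limsup_le_limsup ?_
  filter_upwards [h] with s hs
  exact_mod_cast hs

lemma dini_le_of_eventually {f : ℝ → ℝ} {t C : ℝ}
    (h : ∀ᶠ s in nhdsWithin (0:ℝ) (Set.Ioi 0), (f (t+s) - f t)/s ≤ C) :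
    DiniUpper f t ≤ (C : EReal) := by
  refine Filter.limsup_le_of_le ?_ ?_
  · isBoundedDefault
  · filter_upwards [h] with s hs
    exact_mod_cast hs

lemma dini_quot_eventually {f : ℝ → ℝ} {t L : ℝ}
    (h : DiniUpper f t ≤ (L : EReal)) {ε : ℝ} (hε : 0 < ε) :
    ∀ᶠ s in nhdsWithin (0:ℝ) (Set.Ioi 0), (f (t+s) - f t)/s ≤ L + ε := by
  have hlt : DiniUpper f t < ((L + ε : ℝ) : EReal) := by
    apply lt_of_le_of_lt h
    exact_mod_cast lt_add_of_pos_right L hε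
  have h2 := Filter.eventually_lt_of_limsup_lt hlt
  filter_upwards [h2] with s hs
  exact le_of_lt (by exact_mod_cast hs)

lemma dini_congr {f g : ℝ → ℝ} {t : ℝ}
    (h : ∀ᶠ s in nhdsWithin (0:ℝ) (Set.Ioi 0), f (t+s) = g (t+s)) (h0 : f t = g t) :
    DiniUpper f t = DiniUpper g t := by
  apply Filter.limsup_congr
  filter_upwards [h] with s hs
  rw [hs, h0]

lemma dini_comp (φ g : ℝ → ℝ) (t M L : ℝ) (hM : 0 < M)
    (hφ : HasDerivAt φ M (g t))
    (hg : Filter.Tendsto (fun s => g (t + s)) (nhdsWithin (0:ℝ) (Set.Ioi 0)) (nhds (g t)))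
    (hL : ∀ ε, 0 < ε → ∀ᶠ s in nhdsWithin (0:ℝ) (Set.Ioi 0), (g (t+s) - g t)/s ≤ L + ε) :
    DiniUpper (fun u => φ (g u)) t ≤ ((M * L : ℝ) : EReal) := by
  by_contra hcon
  push_neg at hcon
  obtain ⟨b, hb1, hb2⟩ := EReal.exists_between_coe_real hcon
  have hb1' : M * L < b := by exact_mod_cast hb1
  set ε' : ℝ := (b - M*L)/(2*M) with hε'def
  have hε'pos : 0 < ε' := by
    apply div_pos (by linarith) (by linarith)
  set A : ℝ := |L + ε'| with hA
  set ε : ℝ := min (M/2) ((b - M*L)/(2*(A+1))) with hεdef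
  have hApos : 0 ≤ A := abs_nonneg _
  have hεpos : 0 < ε := by
    apply lt_min (by linarith)
    apply div_pos (by linarith) (by linarith)
  have hεM : ε < M := lt_of_le_of_lt (min_le_left _ _) (by linarith)
  have hB : M*(L+ε') + ε*A < b := by
    have h1 : M*(L+ε') = M*L + (b - M*L)/2 := by
      field_simp [hε'def]
      have e : ε' * (2*M) = b - M*L := by
        rw [hε'def]; exact div_mul_cancel₀ _ (by linarith : (0:ℝ) < 2*M).ne'
      linear_combination e
    have h2 : ε*A ≤ (b - M*L)/(2*(A+1)) * A :=
      mul_le_mul_of_nonneg_right (min_le_right _ _) hApos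
    have h3 : (b - M*L)/(2*(A+1)) * A < (b - M*L)/2 := by
      rw [div_mul_eq_mul_div, div_lt_div_iff₀ (by linarith) (by linarith)]
      nlinarith
    linarith
  have hev : ∀ᶠ s in nhdsWithin (0:ℝ) (Set.Ioi 0),
      (φ (g (t+s)) - φ (g t))/s ≤ M*(L+ε') + ε*A := by
    have hlo := (hasDerivAt_iff_isLittleO.1 hφ).bound hεpos
    filter_upwards [hL ε' hε'pos, hg.eventually hlo, self_mem_nhdsWithin] with s hq hlit hs
    replace hs : 0 < s := hs
    set Δ : ℝ := g (t+s) - g t with hΔ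
    have habs : |φ (g (t+s)) - φ (g t) - Δ * M| ≤ ε * |Δ| := by
      have h4 := hlit
      simp only [Real.norm_eq_abs, smul_eq_mul] at h4
      convert h4 using 3 <;> ring
    have h1 : φ (g (t+s)) - φ (g t) ≤ M*Δ + ε*|Δ| := by
      have := (abs_le.1 habs).2
      linarith
    have h2 : (φ (g (t+s)) - φ (g t))/s ≤ (M*Δ + ε*|Δ|)/s := by
      gcongr
    have h3 : (M*Δ + ε*|Δ|)/s = M*(Δ/s) + ε*|Δ/s| := by
      rw [abs_div, abs_of_pos hs]
      field_simp
    have hx : Δ/s ≤ L + ε' := hq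
    set x : ℝ := Δ/s with hxdef
    have h4 : M*x + ε*|x| ≤ M*(L+ε') + ε*A := by
      rcases le_or_gt 0 x with hx0 | hx0
      · rw [abs_of_nonneg hx0]
        have hLε : 0 ≤ L + ε' := le_trans hx0 hx
        have hA' : L + ε' ≤ A := le_abs_self _
        nlinarith
      · rw [abs_of_neg hx0]
        have hA' : -A ≤ L + ε' := neg_abs_le _
        nlinarith
    calc (φ (g (t+s)) - φ (g t))/s ≤ (M*Δ + ε*|Δ|)/s := h2
      _ = M*x + ε*|x| := h3
      _ ≤ M*(L+ε') + ε*A := h4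
  have hd := dini_le_of_eventually (f := fun u => φ (g u)) (t := t) hev
  have hfin : DiniUpper (fun u => φ (g u)) t ≤ ((b:ℝ) : EReal) :=
    le_trans hd (by exact_mod_cast hB.le)
  exact absurd (lt_of_le_of_lt hfin hb2) (lt_irrefl _)

end DiniAux

universe u

/-- construction of a time-varying ISS-Lyapunov function for unstable flows and
stable jumps: `V(t,y) = F̃⁻¹(F̃(V_cand(y)) − ((t − tᵢ)/(t_{i+1} − tᵢ))(θ + δ))` on
`[tᵢ, t_{i+1})` (and `0` when `V_cand(y) = 0`), where `F̃(q) = ∫₁^q ds/(−ρ(s))`. -/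
theorem constructionUnstableFlow
    (ρ : ℝ → ℝ) (hρ : ClassP (fun s => -ρ s))
    (hdiv : ∫⁻ s in Set.Ioc (0:ℝ) 1, ENNReal.ofReal ((-ρ s)⁻¹) = ⊤)
    (α : ℝ → ℝ) (hα : ClassKInf α)
    (θ δ : ℝ) (hθ : 0 < θ) (hδ : 0 < δ)
    (hjumpint : ∀ a, 0 < a → θ + δ ≤ ∫ s in (α a)..a, (-ρ s)⁻¹)
    (Ftil Finv : ℝ → ℝ)
    (hFtil : ∀ q, Ftil q = ∫ s in (1:ℝ)..q, (-ρ s)⁻¹)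
    (hFinv : ∀ q, 0 < q → Finv (Ftil q) = q)
    (ψ₁ ψ₂ η : ℝ → ℝ) (hψ₁ : ClassKInf ψ₁) (hψ₂ : ClassKInf ψ₂) (hη : ClassKInf η)
    (ψ₃ : ℝ → ℝ) (hψ₃ : ClassK ψ₃)
    (X : Type u) [NormedAddCommGroup X] [NormedSpace ℝ X]
    (t₀ : ℝ) (τ : ℕ → ℝ) (hτ : IsImpulseSeq t₀ τ)
    (hdwell : ∀ i : ℕ, τ (i + 1) - τ i ≤ θ)
    (r : ℝ) (hr : 0 ≤ r)
    (Vc : X → ℝ) (hVccont : Continuous Vc)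
    (hVcb : ∀ y : X, ψ₁ ‖y‖ ≤ Vc y ∧ Vc y ≤ ψ₂ ‖y‖)
    (x : ℝ → X)
    (hreg : ImpulsiveRegular t₀ τ (fun t => Vc (x t)))
    (hflow : ∀ t, t₀ ≤ t → t ∉ impulseSet τ → η r ≤ Vc (x t) →
      DiniUpper (fun s => Vc (x s)) t ≤ (((-ρ (Vc (x t))) : ℝ) : EReal))
    (hjump : ∀ i : ℕ, 1 ≤ i → η r ≤ Function.leftLim (fun s => Vc (x s)) (τ i) →
      Vc (x (τ i)) ≤ α (Function.leftLim (fun s => Vc (x s)) (τ i)))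
    (hjumpsmall : ∀ i : ℕ, 1 ≤ i → Function.leftLim (fun s => Vc (x s)) (τ i) < η r →
      Vc (x (τ i)) ≤ ψ₃ r)
    (V : ℝ → X → ℝ)
    (hVdef : ∀ i : ℕ, ∀ t, τ i ≤ t → t < τ (i + 1) → ∀ y : X,
      V t y = if Vc y = 0 then 0
        else Finv (Ftil (Vc y) - ((t - τ i) / (τ (i + 1) - τ i)) * (θ + δ))) :
    -- (i) sandwich bounds by class 𝒦∞ functions of the norm
    (∃ α₁ α₂ : ℝ → ℝ, ClassKInf α₁ ∧ ClassKInf α₂ ∧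
      ∀ t, t₀ ≤ t → ∀ y : X, α₁ ‖y‖ ≤ V t y ∧ V t y ≤ α₂ ‖y‖) ∧
    -- the map t ↦ V(t, x(t)) is impulsive-regular
    ImpulsiveRegular t₀ τ (fun t => V t (x t)) ∧
    -- (ii) strict decay along the flow outside the perturbation radius
    (∀ t, t₀ ≤ t → t ∉ impulseSet τ → η r ≤ V t (x t) →
      DiniUpper (fun s => V s (x s)) t ≤ (((-(δ / θ * (-ρ (V t (x t))))) : ℝ) : EReal)) ∧
    -- (ii) non-increase at jumps outside the perturbation radius
    (∀ i : ℕ, 1 ≤ i → η r ≤ Function.leftLim (fun s => V s (x s)) (τ i) →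
      V (τ i) (x (τ i)) ≤ Function.leftLim (fun s => V s (x s)) (τ i)) ∧
    -- (iii) bound at jumps inside the perturbation radius
    (∀ i : ℕ, 1 ≤ i → Function.leftLim (fun s => V s (x s)) (τ i) < η r →
      V (τ i) (x (τ i)) ≤ max (ψ₃ r) (η r)) := by
  classical
  obtain ⟨hPc, hP0, hPpos⟩ := hρ
  have hρ0 : -ρ 0 = 0 := hP0
  obtain ⟨⟨hψ₁c, hψ₁m, hψ₁0⟩, hψ₁top⟩ := hψ₁
  obtain ⟨⟨hαc, hαm, hα0⟩, hαtop⟩ := hα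
  obtain ⟨hτ0, hτm, hτtop⟩ := hτ
  have hθδ : 0 < θ + δ := by linarith
  have hΔ : ∀ i : ℕ, 0 < τ (i+1) - τ i := fun i => sub_pos.2 (hτm (Nat.lt_succ_self i))
  have hjump' : ∀ a, 0 < a → Ftil (α a) ≤ Ftil a - (θ+δ) := by
    intro a ha
    have hαa : 0 < α a := classK_pos hαm hα0 ha
    have h1 := hjumpint a ha
    have hsub := aux_F_sub hPc hPpos hFtil hαa ha
    linarith
  have hFlt : ∀ {a b : ℝ}, 0 < a → a < b → Ftil a < Ftil b :=
    fun ha hab => aux_F_lt hPc hPpos hFtil ha hab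
  have hFle : ∀ {a b : ℝ}, 0 < a → a ≤ b → Ftil a ≤ Ftil b :=
    fun ha hab => aux_F_le hPc hPpos hFtil ha hab
  have hbot := aux_F_atBot hPc hPpos hFtil hdiv
  have htop := aux_F_atTop hPc hPpos hFtil hθδ hαc hα0 hαtop hjump'
  have hsurj := aux_F_surj hPc hPpos hFtil hbot htop
  have hIspec : ∀ z : ℝ, 0 < Finv z ∧ Ftil (Finv z) = z := aux_Finv_spec hsurj hFinv
  have hImono : Monotone Finv := aux_Finv_mono hFlt hsurj hFinv
  have hIstrict : StrictMono Finv := aux_Finv_strictMono hFlt hsurj hFinv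
  have hIcont : ∀ z, ContinuousAt Finv z := aux_Finv_contAt hFlt hsurj hFinv
  have hIderiv : ∀ z, HasDerivAt Finv (-ρ (Finv z)) z :=
    aux_Finv_deriv hFlt hsurj hFinv hPpos (fun hq => aux_F_deriv hPc hPpos hFtil hq)
  have hItop := aux_Finv_atTop hFlt hsurj hFinv
  have hIlt : ∀ {q z : ℝ}, 0 < q → (Finv z < q ↔ z < Ftil q) :=
    fun hq => aux_Finv_lt_iff hFlt hsurj hFinv hq
  have hIle' : ∀ {q z : ℝ}, 0 < q → (q ≤ Finv z ↔ Ftil q ≤ z) :=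
    fun hq => aux_Finv_le_iff' hFlt hsurj hFinv hq
  have hVc0 : ∀ y : X, 0 ≤ Vc y :=
    fun y => le_trans (classK_nonneg hψ₁m hψ₁0 (norm_nonneg y)) (hVcb y).1
  have hη0 : 0 ≤ η r := classK_nonneg hη.1.2.1 hη.1.2.2 hr
  -- index location
  have hidx : ∀ t, t₀ ≤ t → ∃ i : ℕ, τ i ≤ t ∧ t < τ (i+1) := by
    intro t ht
    have hex : ∃ n, t < τ n := (hτtop.eventually (Filter.eventually_gt_atTop t)).exists
    have hklt : t < τ (Nat.find hex) := Nat.find_spec hex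
    have hk0 : Nat.find hex ≠ 0 := by
      intro h
      rw [h, hτ0] at hklt
      exact absurd ht (not_le.2 hklt)
    obtain ⟨j, hj⟩ : ∃ j, Nat.find hex = j + 1 :=
      ⟨Nat.find hex - 1, (Nat.succ_pred_eq_of_pos (Nat.pos_of_ne_zero hk0)).symm⟩
    refine ⟨j, ?_, by rw [← hj]; exact hklt⟩
    by_contra hcon
    push_neg at hcon
    exact Nat.find_min hex (by rw [hj]; exact Nat.lt_succ_self j) hcon
  -- sandwich between 0 and Vc
  have hVb : ∀ (i : ℕ) (t : ℝ), τ i ≤ t → t < τ (i+1) → ∀ y : X,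
      0 ≤ V t y ∧ V t y ≤ Vc y := by
    intro i t h1 h2 y
    rw [hVdef i t h1 h2 y]
    by_cases h0 : Vc y = 0
    · rw [if_pos h0, h0]
      exact ⟨le_rfl, le_rfl⟩
    · rw [if_neg h0]
      have hVcy : 0 < Vc y := lt_of_le_of_ne (hVc0 y) (Ne.symm h0)
      refine ⟨(hIspec _).1.le, ?_⟩
      have hlam : 0 ≤ (t - τ i)/(τ (i+1) - τ i) := div_nonneg (by linarith) (hΔ i).le
      have harg : Ftil (Vc y) - ((t - τ i)/(τ (i+1) - τ i)) * (θ+δ) ≤ Ftil (Vc y) := by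
        nlinarith
      calc Finv (Ftil (Vc y) - ((t - τ i)/(τ (i+1) - τ i)) * (θ+δ))
          ≤ Finv (Ftil (Vc y)) := hImono harg
        _ = Vc y := hFinv _ hVcy
  -- key tendsto lemma
  have keyT : ∀ (l : Filter ℝ) (i : ℕ) (W lam : ℝ), 0 ≤ W →
      (∀ᶠ t in l, τ i ≤ t ∧ t < τ (i+1)) →
      Filter.Tendsto (fun t => Vc (x t)) l (nhds W) →
      Filter.Tendsto (fun t => (t - τ i)/(τ (i+1) - τ i)) l (nhds lam) →
      Filter.Tendsto (fun t => V t (x t)) l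
        (nhds (if W = 0 then 0 else Finv (Ftil W - lam * (θ+δ)))) := by
    intro l i W lam hW hev hwl hlaml
    by_cases hW0 : W = 0
    · rw [if_pos hW0]
      rw [hW0] at hwl
      apply tendsto_of_tendsto_of_tendsto_of_le_of_le' tendsto_const_nhds hwl
      · filter_upwards [hev] with t ht
        exact (hVb i t ht.1 ht.2 (x t)).1
      · filter_upwards [hev] with t ht
        exact (hVb i t ht.1 ht.2 (x t)).2
    · rw [if_neg hW0]
      have hWpos : 0 < W := lt_of_le_of_ne hW (Ne.symm hW0)
      have hev0 : ∀ᶠ t in l, 0 < Vc (x t) := hwl.eventually (eventually_gt_nhds hWpos)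
      have htt : Filter.Tendsto
          (fun t => Finv (Ftil (Vc (x t)) - ((t - τ i)/(τ (i+1) - τ i)) * (θ+δ))) l
          (nhds (Finv (Ftil W - lam * (θ+δ)))) := by
        apply (hIcont _).tendsto.comp
        apply Filter.Tendsto.sub
        · exact ((aux_F_contAt hPc hPpos hFtil hWpos).tendsto).comp hwl
        · exact hlaml.mul_const _
      apply htt.congr'
      filter_upwards [hev, hev0] with t ht h0
      rw [hVdef i t ht.1 ht.2, if_neg h0.ne']
  -- regularity of t ↦ V t (x t)
  have hreg1 : ∀ t, t₀ ≤ t → ContinuousWithinAt (fun u => V u (x u)) (Set.Ici t) t := by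
    intro t ht
    obtain ⟨i, hi1, hi2⟩ := hidx t ht
    have hev : ∀ᶠ u in nhdsWithin t (Set.Ici t), τ i ≤ u ∧ u < τ (i+1) := by
      have h1 : ∀ᶠ u in nhdsWithin t (Set.Ici t), u < τ (i+1) :=
        mem_nhdsWithin_of_mem_nhds (Iio_mem_nhds hi2)
      have h2 : ∀ᶠ u in nhdsWithin t (Set.Ici t), τ i ≤ u := by
        filter_upwards [self_mem_nhdsWithin] with u hu
        exact hi1.trans hu
      exact h2.and h1
    have hwl : Filter.Tendsto (fun u => Vc (x u)) (nhdsWithin t (Set.Ici t))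
        (nhds (Vc (x t))) := hreg.1 t ht
    have hlaml : Filter.Tendsto (fun u => (u - τ i)/(τ (i+1) - τ i)) (nhdsWithin t (Set.Ici t))
        (nhds ((t - τ i)/(τ (i+1) - τ i))) :=
      (((continuous_id.sub continuous_const).div_const _).tendsto t).mono_left nhdsWithin_le_nhds
    have h := keyT _ i _ _ (hVc0 (x t)) hev hwl hlaml
    rw [ContinuousWithinAt, hVdef i t hi1 hi2 (x t)]
    exact h
  have hreg2 : ∀ t, t₀ ≤ t → t ∉ impulseSet τ →
      ContinuousWithinAt (fun u => V u (x u)) (Set.Ici t₀) t := by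
    intro t ht htS
    obtain ⟨i, hi1, hi2⟩ := hidx t ht
    have hev : ∀ᶠ u in nhdsWithin t (Set.Ici t₀), τ i ≤ u ∧ u < τ (i+1) := by
      have h1 : ∀ᶠ u in nhdsWithin t (Set.Ici t₀), u < τ (i+1) :=
        mem_nhdsWithin_of_mem_nhds (Iio_mem_nhds hi2)
      have h2 : ∀ᶠ u in nhdsWithin t (Set.Ici t₀), τ i ≤ u := by
        rcases Nat.eq_zero_or_pos i with rfl | hipos
        · filter_upwards [self_mem_nhdsWithin] with u hu
          rw [hτ0]; exact hu
        · have hlt : τ i < t := by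
            rcases eq_or_lt_of_le hi1 with heq | hlt
            · exact absurd ⟨i, hipos, heq⟩ htS
            · exact hlt
          filter_upwards [mem_nhdsWithin_of_mem_nhds (Ioi_mem_nhds hlt)] with u hu
          exact le_of_lt hu
      exact h2.and h1
    have hwl : Filter.Tendsto (fun u => Vc (x u)) (nhdsWithin t (Set.Ici t₀))
        (nhds (Vc (x t))) := hreg.2.1 t ht htS
    have hlaml : Filter.Tendsto (fun u => (u - τ i)/(τ (i+1) - τ i)) (nhdsWithin t (Set.Ici t₀))
        (nhds ((t - τ i)/(τ (i+1) - τ i))) :=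
      (((continuous_id.sub continuous_const).div_const _).tendsto t).mono_left nhdsWithin_le_nhds
    have h := keyT _ i _ _ (hVc0 (x t)) hev hwl hlaml
    rw [ContinuousWithinAt, hVdef i t hi1 hi2 (x t)]
    exact h
  -- left limits: packaged statement
  have hleft : ∀ i : ℕ, 1 ≤ i → ∃ L : ℝ, 0 ≤ L ∧
      Filter.Tendsto (fun u => Vc (x u)) (nhdsWithin (τ i) (Set.Iio (τ i))) (nhds L) ∧
      Filter.Tendsto (fun u => V u (x u)) (nhdsWithin (τ i) (Set.Iio (τ i)))
        (nhds (if L = 0 then 0 else Finv (Ftil L - (θ+δ)))) := by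
    intro i hi
    obtain ⟨j, hj⟩ := Nat.exists_eq_succ_of_ne_zero (Nat.one_le_iff_ne_zero.1 hi)
    subst hj
    obtain ⟨L, hL⟩ := hreg.2.2 (j+1) hi
    have hL0 : 0 ≤ L := ge_of_tendsto' hL (fun c => hVc0 (x c))
    refine ⟨L, hL0, hL, ?_⟩
    have hev : ∀ᶠ u in nhdsWithin (τ (j+1)) (Set.Iio (τ (j+1))), τ j ≤ u ∧ u < τ (j+1) := by
      filter_upwards [Ioo_mem_nhdsLT_of_mem ⟨hτm (Nat.lt_succ_self j), le_rfl⟩] with u hu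
      exact ⟨hu.1.le, hu.2⟩
    have hlaml : Filter.Tendsto (fun u => (u - τ j)/(τ (j+1) - τ j))
        (nhdsWithin (τ (j+1)) (Set.Iio (τ (j+1)))) (nhds 1) := by
      have h1 : Filter.Tendsto (fun u => (u - τ j)/(τ (j+1) - τ j))
          (nhdsWithin (τ (j+1)) (Set.Iio (τ (j+1)))) (nhds ((τ (j+1) - τ j)/(τ (j+1) - τ j))) :=
        (((continuous_id.sub continuous_const).div_const _).tendsto _).mono_left
          nhdsWithin_le_nhds
      rwa [div_self (hΔ j).ne'] at h1
    have h := keyT _ j L 1 hL0 hev hL hlaml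
    rwa [one_mul] at h
  have hvτeq : ∀ i : ℕ, V (τ i) (x (τ i)) = Vc (x (τ i)) := by
    intro i
    rw [hVdef i (τ i) le_rfl (hτm (Nat.lt_succ_self i))]
    by_cases h0 : Vc (x (τ i)) = 0
    · rw [if_pos h0, h0]
    · rw [if_neg h0, sub_self, zero_div, zero_mul, sub_zero]
      exact hFinv _ (lt_of_le_of_ne (hVc0 _) (Ne.symm h0))
  have hleft' : ∀ i : ℕ, 1 ≤ i → ∃ L : ℝ, 0 ≤ L ∧
      Function.leftLim (fun u => Vc (x u)) (τ i) = L ∧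
      Function.leftLim (fun u => V u (x u)) (τ i)
        = (if L = 0 then 0 else Finv (Ftil L - (θ+δ))) := by
    intro i hi
    obtain ⟨L, hL0, hwl, hvl⟩ := hleft i hi
    have hne : nhdsWithin (τ i) (Set.Iio (τ i)) ≠ ⊥ :=
      (inferInstance : (nhdsWithin (τ i) (Set.Iio (τ i))).NeBot).ne
    exact ⟨L, hL0, leftLim_eq_of_tendsto hwl, leftLim_eq_of_tendsto hvl⟩
  refine ⟨?_, ⟨hreg1, hreg2, ?_⟩, ?_, ?_, ?_⟩
  · -- (i) sandwich bounds
    refine ⟨fun s => if s ≤ 0 then 0 else Finv (Ftil (ψ₁ s) - (θ+δ)), ψ₂,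
      ⟨⟨?_, ?_, if_pos le_rfl⟩, ?_⟩, hψ₂, ?_⟩
    · -- continuity of α₁
      intro s hs
      rcases eq_or_lt_of_le (Set.mem_Ici.1 hs) with heq | hspos
      · subst heq
        rw [ContinuousWithinAt]
        have hval : (if (0:ℝ) ≤ 0 then (0:ℝ) else Finv (Ftil (ψ₁ 0) - (θ+δ))) = 0 :=
          if_pos le_rfl
        rw [hval]
        apply tendsto_order.2
        constructor
        · intro b hb
          filter_upwards with u
          by_cases hu : u ≤ 0
          · rw [if_pos hu]; exact hb
          · rw [if_neg hu]; exact lt_trans hb (hIspec _).1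
        · intro b hb
          have hB : 0 < Finv (Ftil b + (θ+δ)) := (hIspec _).1
          have hFB : Ftil (Finv (Ftil b + (θ+δ))) = Ftil b + (θ+δ) := (hIspec _).2
          have hψ : Filter.Tendsto ψ₁ (nhdsWithin 0 (Set.Ici 0)) (nhds 0) := by
            have := hψ₁c 0 (Set.mem_Ici.2 le_rfl)
            rwa [ContinuousWithinAt, hψ₁0] at this
          filter_upwards [hψ (Iio_mem_nhds hB)] with u hu
          by_cases hu2 : u ≤ 0
          · rw [if_pos hu2]; exact hb
          · rw [if_neg hu2]
            push_neg at hu2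
            have hψu : 0 < ψ₁ u := classK_pos hψ₁m hψ₁0 hu2
            rw [hIlt hb]
            have h2 : Ftil (ψ₁ u) < Ftil (Finv (Ftil b + (θ+δ))) := hFlt hψu hu
            linarith
      · apply ContinuousAt.continuousWithinAt
        have hG : ContinuousAt (fun u => Finv (Ftil (ψ₁ u) - (θ+δ))) s := by
          apply (hIcont _).comp
          apply ContinuousAt.sub _ continuousAt_const
          apply (aux_F_contAt hPc hPpos hFtil (classK_pos hψ₁m hψ₁0 hspos)).comp
          exact hψ₁c.continuousAt (Ici_mem_nhds hspos)
        apply hG.congr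
        filter_upwards [Ioi_mem_nhds hspos] with u hu
        rw [if_neg (not_le.2 hu)]
    · -- strict monotonicity of α₁
      intro a ha b hb hab
      rcases eq_or_lt_of_le (Set.mem_Ici.1 ha) with heq | hapos
      · subst heq
        dsimp only
        rw [if_pos le_rfl, if_neg (not_le.2 hab)]
        exact (hIspec _).1
      · dsimp only
        rw [if_neg (not_le.2 hapos), if_neg (not_le.2 (hapos.trans hab))]
        apply hIstrict
        have h1 := hψ₁m ha hb hab
        have h2 := hFlt (classK_pos hψ₁m hψ₁0 hapos) h1
        linarith
    · -- α₁ tends to atTop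
      have h0 : Filter.Tendsto (fun u => Ftil (ψ₁ u) - (θ+δ)) Filter.atTop Filter.atTop := by
        have h1 := Filter.tendsto_atTop_add_const_right Filter.atTop (-(θ+δ)) (htop.comp hψ₁top)
        simpa [sub_eq_add_neg] using h1
      have h1 : Filter.Tendsto (fun u => Finv (Ftil (ψ₁ u) - (θ+δ))) Filter.atTop Filter.atTop :=
        hItop.comp h0
      apply h1.congr'
      filter_upwards [Filter.eventually_ge_atTop (1:ℝ)] with u hu
      rw [if_neg (by linarith : ¬ u ≤ 0)]
    · -- bounds
      intro t ht y
      obtain ⟨i, hi1, hi2⟩ := hidx t ht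
      dsimp only
      constructor
      · by_cases h0 : Vc y = 0
        · have hψy : ψ₁ ‖y‖ = 0 :=
            le_antisymm (h0 ▸ (hVcb y).1) (classK_nonneg hψ₁m hψ₁0 (norm_nonneg y))
          have hy0 : ‖y‖ ≤ 0 := by
            by_contra hcon
            push_neg at hcon
            exact absurd hψy (ne_of_gt (classK_pos hψ₁m hψ₁0 hcon))
          rw [if_pos hy0, hVdef i t hi1 hi2 y, if_pos h0]
        · rw [hVdef i t hi1 hi2 y, if_neg h0]
          rcases le_or_gt ‖y‖ 0 with hy0 | hy0
          · rw [if_pos hy0]; exact (hIspec _).1.le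
          · rw [if_neg (not_le.2 hy0)]
            apply hImono
            have hψpos : 0 < ψ₁ ‖y‖ := classK_pos hψ₁m hψ₁0 hy0
            have h1 : Ftil (ψ₁ ‖y‖) ≤ Ftil (Vc y) := hFle hψpos (hVcb y).1
            have hlam1 : (t - τ i)/(τ (i+1) - τ i) ≤ 1 :=
              le_of_lt ((div_lt_one (hΔ i)).2 (by linarith))
            have hlam0 : 0 ≤ (t - τ i)/(τ (i+1) - τ i) := div_nonneg (by linarith) (hΔ i).le
            nlinarith
      · exact (hVb i t hi1 hi2 y).2.trans (hVcb y).2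
  · -- left limits exist
    intro i hi
    obtain ⟨L, hL0, hwl, hvl⟩ := hleft i hi
    exact ⟨_, hvl⟩
  · -- (ii) flow decay
    intro t ht htS hηv
    obtain ⟨i, hi1, hi2⟩ := hidx t ht
    have hvle : V t (x t) ≤ Vc (x t) := (hVb i t hi1 hi2 (x t)).2
    have hηw : η r ≤ Vc (x t) := hηv.trans hvle
    have hflow' := hflow t ht htS hηw
    have htmap : Filter.Tendsto (fun s : ℝ => t + s) (nhdsWithin (0:ℝ) (Set.Ioi 0)) (nhds t) := by
      have h1 : Filter.Tendsto (fun s : ℝ => t + s) (nhds (0:ℝ)) (nhds (t+0)) :=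
        (continuous_add_left t).tendsto 0
      rw [add_zero] at h1
      exact h1.mono_left nhdsWithin_le_nhds
    have hshift : Filter.Tendsto (fun s : ℝ => t + s) (nhdsWithin (0:ℝ) (Set.Ioi 0))
        (nhdsWithin t (Set.Ici t)) := by
      rw [tendsto_nhdsWithin_iff]
      refine ⟨htmap, ?_⟩
      filter_upwards [self_mem_nhdsWithin] with s hs
      exact le_add_of_nonneg_right (le_of_lt (Set.mem_Ioi.1 hs))
    have hwlim : Filter.Tendsto (fun s => Vc (x (t + s))) (nhdsWithin (0:ℝ) (Set.Ioi 0))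
        (nhds (Vc (x t))) := Filter.Tendsto.comp (g := fun u : ℝ => Vc (x u)) (f := fun s : ℝ => t + s) (hreg.1 t ht) hshift
    have hwin : ∀ᶠ s in nhdsWithin (0:ℝ) (Set.Ioi 0), t + s < τ (i+1) :=
      htmap.eventually (IsOpen.eventually_mem isOpen_Iio hi2)
    by_cases h0 : Vc (x t) = 0
    · have hvt : V t (x t) = 0 := by rw [hVdef i t hi1 hi2, if_pos h0]
      have hcmp : DiniUpper (fun s => V s (x s)) t ≤ DiniUpper (fun s => Vc (x s)) t := by
        apply dini_le_dini
        filter_upwards [hwin, self_mem_nhdsWithin] with s hs hspos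
        replace hspos : 0 < s := hspos
        have h1 : τ i ≤ t + s := hi1.trans (by linarith)
        have h2 := (hVb i (t+s) h1 hs (x (t+s))).2
        rw [hvt, h0]
        gcongr
      refine hcmp.trans (hflow'.trans ?_)
      rw [hvt, h0, hρ0]
      norm_num
    · have hwpos : 0 < Vc (x t) := lt_of_le_of_ne (hVc0 _) (Ne.symm h0)
      set c : ℝ := (θ+δ)/(τ (i+1) - τ i) with hcdef
      set g : ℝ → ℝ := fun u => Ftil (Vc (x u)) - ((u - τ i)/(τ (i+1) - τ i)) * (θ+δ) with hgdef
      have hvt : V t (x t) = Finv (g t) := by rw [hVdef i t hi1 hi2, if_neg h0]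
      have hMpos : 0 < -ρ (V t (x t)) := by rw [hvt]; exact hPpos _ (hIspec _).1
      have hd1 : DiniUpper (fun u => Ftil (Vc (x u))) t
          ≤ (((-ρ (Vc (x t)))⁻¹ * (-ρ (Vc (x t))) : ℝ) : EReal) := by
        exact dini_comp Ftil (fun u => Vc (x u)) t ((-ρ (Vc (x t)))⁻¹) (-ρ (Vc (x t)))
          (inv_pos.2 (hPpos _ hwpos)) (aux_F_deriv hPc hPpos hFtil hwpos) hwlim
          (fun ε hε => dini_quot_eventually hflow' hε)
      rw [inv_mul_cancel₀ (hPpos _ hwpos).ne'] at hd1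
      have hq1 : ∀ ε, 0 < ε → ∀ᶠ s in nhdsWithin (0:ℝ) (Set.Ioi 0),
          (Ftil (Vc (x (t+s))) - Ftil (Vc (x t)))/s ≤ 1 + ε :=
        fun ε hε => dini_quot_eventually hd1 hε
      have hgev : ∀ ε, 0 < ε → ∀ᶠ s in nhdsWithin (0:ℝ) (Set.Ioi 0),
          (g (t+s) - g t)/s ≤ (1 - c) + ε := by
        intro ε hε
        filter_upwards [hq1 ε hε, self_mem_nhdsWithin] with s h1 hs
        replace hs : 0 < s := hs
        have hgd : g (t+s) - g t = (Ftil (Vc (x (t+s))) - Ftil (Vc (x t))) - s * c := by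
          rw [hgdef, hcdef]
          field_simp
          ring
        rw [hgd, sub_div]
        have h2 : s * c / s = c := by rw [mul_comm, mul_div_assoc, div_self hs.ne', mul_one]
        rw [h2]
        linarith
      have hglim : Filter.Tendsto (fun s => g (t + s)) (nhdsWithin (0:ℝ) (Set.Ioi 0))
          (nhds (g t)) := by
        rw [hgdef]
        apply Filter.Tendsto.sub
        · exact (aux_F_contAt hPc hPpos hFtil hwpos).tendsto.comp hwlim
        · have hcont : Continuous (fun u : ℝ => ((u - τ i)/(τ (i+1) - τ i)) * (θ+δ)) :=
            (((continuous_id.sub continuous_const).div_const _).mul continuous_const)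
          exact (hcont.tendsto t).comp htmap
      have hd2 : DiniUpper (fun u => Finv (g u)) t
          ≤ (((-ρ (V t (x t))) * ((1 - c) : ℝ) : ℝ) : EReal) := by
        apply dini_comp Finv g t (-ρ (V t (x t))) (1 - c) hMpos _ hglim hgev
        rw [hvt]
        exact hIderiv (g t)
      have hcongr : DiniUpper (fun s => V s (x s)) t = DiniUpper (fun u => Finv (g u)) t := by
        apply dini_congr _ hvt
        have hev0 : ∀ᶠ s in nhdsWithin (0:ℝ) (Set.Ioi 0), 0 < Vc (x (t+s)) :=
          hwlim.eventually (eventually_gt_nhds hwpos)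
        filter_upwards [hwin, hev0, self_mem_nhdsWithin] with s h1 h2 hs
        replace hs : 0 < s := hs
        rw [hVdef i (t+s) (hi1.trans (by linarith)) h1, if_neg h2.ne']
      rw [hcongr]
      refine hd2.trans ?_
      rw [EReal.coe_le_coe_iff]
      have hcge : (θ+δ)/θ ≤ c := by
        rw [hcdef, div_le_div_iff₀ hθ (hΔ i)]
        nlinarith [hdwell i, hΔ i]
      have h1c : 1 - c ≤ -(δ/θ) := by
        have h2 : (θ+δ)/θ = 1 + δ/θ := by field_simp
        linarith
      nlinarith [hMpos]
  · -- (ii) jump non-increase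
    intro i hi hle
    obtain ⟨L, hL0, hllw, hllv⟩ := hleft' i hi
    have hvτ : V (τ i) (x (τ i)) = Vc (x (τ i)) := hvτeq i
    by_cases hL : L = 0
    · rw [hllv, if_pos hL] at hle ⊢
      have hwτ : Vc (x (τ i)) ≤ α L := by
        have h1 := hjump i hi (by rw [hllw, hL]; exact hle)
        rwa [hllw] at h1
      rw [hL, hα0] at hwτ
      rw [hvτ]
      exact le_antisymm hwτ (hVc0 _) ▸ le_rfl
    · have hLpos : 0 < L := lt_of_le_of_ne hL0 (Ne.symm hL)
      rw [hllv, if_neg hL] at hle ⊢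
      have hVVle : Finv (Ftil L - (θ+δ)) ≤ L := by
        calc Finv (Ftil L - (θ+δ)) ≤ Finv (Ftil L) := hImono (by linarith)
          _ = L := hFinv _ hLpos
      have hjw : Vc (x (τ i)) ≤ α L := by
        have h1 := hjump i hi (by rw [hllw]; exact hle.trans hVVle)
        rwa [hllw] at h1
      have hαpos : 0 < α L := classK_pos hαm hα0 hLpos
      have hαle : α L ≤ Finv (Ftil L - (θ+δ)) := by
        rw [hIle' hαpos]
        exact hjump' L hLpos
      rw [hvτ]
      exact hjw.trans hαle
  · -- (iii) jump bound inside perturbation radius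
    intro i hi hlt
    obtain ⟨L, hL0, hllw, hllv⟩ := hleft' i hi
    have hvτ : V (τ i) (x (τ i)) = Vc (x (τ i)) := hvτeq i
    rw [hllv] at hlt
    by_cases hL : L = 0
    · rw [if_pos hL] at hlt
      have hws := hjumpsmall i hi (by rw [hllw, hL]; exact hlt)
      rw [hvτ]
      exact le_trans hws (le_max_left _ _)
    · have hLpos : 0 < L := lt_of_le_of_ne hL0 (Ne.symm hL)
      rw [if_neg hL] at hlt
      rcases lt_or_ge L (η r) with hcase | hcase
      · have hws := hjumpsmall i hi (by rw [hllw]; exact hcase)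
        rw [hvτ]
        exact le_trans hws (le_max_left _ _)
      · have hjw := hjump i hi (by rw [hllw]; exact hcase)
        rw [hllw] at hjw
        have hαpos : 0 < α L := classK_pos hαm hα0 hLpos
        have hαle : α L ≤ Finv (Ftil L - (θ+δ)) := by
          rw [hIle' hαpos]
          exact hjump' L hLpos
        rw [hvτ]
        exact le_trans (hjw.trans (hαle.trans hlt.le)) (le_max_right _ _)
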